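/- For every real $r > 1$ there exists a sequence of integers $(a_n)$ with $\lim_{n\to\infty} a_{n+1}/a_n = r$ such that $(a_n)$ does not converge to $0$ in any non-discrete Hausdorff ring topology on $\mathbb{Z}$. -/

import Mathlib

open Filter Real

private def xseq : ℕ → ℕ
  | 0 => 2
  | k+1 => (xseq k)^2 + 1

private lemma xseq_ge (k : ℕ) : 2^(k+1) ≤ xseq k := by
  induction k with
  | zero => simp [xseq]
  | succ k ih =>
    have h2 : 2 ≤ xseq k := le_trans (Nat.one_lt_two_pow (by omega)) ih
    show 2^(k+2) ≤ (xseq k)^2 + 1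
    calc 2^(k+2) = 2 * 2^(k+1) := by ring
    _ ≤ xseq k * xseq k := Nat.mul_le_mul h2 ih
    _ ≤ (xseq k)^2 + 1 := by nlinarith

private lemma xseq_two_le (k : ℕ) : 2 ≤ xseq k :=
  le_trans (Nat.one_lt_two_pow (by omega)) (xseq_ge k)

private lemma xseq_lt (k : ℕ) : xseq k < xseq (k+1) := by
  have := xseq_two_le k
  show xseq k < (xseq k)^2 + 1
  nlinarith

private noncomputable def Db (k : ℕ) : ℝ := Real.log (xseq (k+1)) - Real.log (xseq k)

private lemma Db_pos (k : ℕ) : 0 < Db k := by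
  have h1 : (0:ℝ) < xseq k := by
    have := xseq_two_le k
    have : (2:ℝ) ≤ xseq k := by exact_mod_cast this
    linarith
  have h2 : (xseq k : ℝ) < xseq (k+1) := by exact_mod_cast xseq_lt k
  exact sub_pos.mpr (Real.log_lt_log h1 h2)

private lemma log_xseq_le_Db (k : ℕ) : Real.log (xseq k) ≤ Db k := by
  have h1 : (0:ℝ) < xseq k := by
    have := xseq_two_le k
    have : (2:ℝ) ≤ xseq k := by exact_mod_cast this
    linarith
  have h2 : (xseq k : ℝ) * xseq k ≤ xseq (k+1) := by
    have : xseq k * xseq k ≤ xseq (k+1) := by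
      show xseq k * xseq k ≤ (xseq k)^2 + 1; nlinarith
    exact_mod_cast this
  have := Real.log_le_log (by positivity) h2
  rw [Real.log_mul (ne_of_gt h1) (ne_of_gt h1)] at this
  unfold Db; linarith

private lemma log_xseq_ge (k : ℕ) : ((k:ℝ)+1) * Real.log 2 ≤ Real.log (xseq k) := by
  have h : ((2:ℝ)^(k+1)) ≤ (xseq k : ℝ) := by exact_mod_cast xseq_ge k
  have h2 := Real.log_le_log (by positivity) h
  rw [Real.log_pow] at h2
  push_cast at h2
  linarith

private lemma Db_tendsto : Tendsto Db atTop atTop := by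
  apply tendsto_atTop_mono log_xseq_le_Db
  apply tendsto_atTop_mono log_xseq_ge
  apply Tendsto.atTop_mul_const (Real.log_pos (by norm_num))
  exact tendsto_atTop_add_const_right _ _ tendsto_natCast_atTop_atTop

section

variable (r : ℝ)

private noncomputable def Lb (k : ℕ) : ℕ := ⌈Db k / Real.log r⌉₊
private noncomputable def nb : ℕ → ℕ
  | 0 => 0
  | k+1 => nb k + Lb r k
private noncomputable def db (k : ℕ) : ℝ := Db k / (Lb r k)
private noncomputable def Kb (m : ℕ) : ℕ := Nat.findGreatest (fun k => nb r k ≤ m) m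
private noncomputable def sb (m : ℕ) : ℝ :=
  Real.log (xseq (Kb r m)) + (m - nb r (Kb r m) : ℕ) * db r (Kb r m)
private noncomputable def ab (m : ℕ) : ℤ := round (Real.exp (sb r m))

variable (hr : 1 < r)
include hr

private lemma Lb_pos (k : ℕ) : 0 < Lb r k := by
  rw [Lb, Nat.ceil_pos]
  exact div_pos (Db_pos k) (Real.log_pos hr)

private lemma nb_strictMono : StrictMono (nb r) := by
  apply strictMono_nat_of_lt_succ
  intro k
  have := Lb_pos r hr k
  show nb r k < nb r k + Lb r k
  omega

omit hr in
private lemma nb_le_self (m : ℕ) : nb r (Kb r m) ≤ m := by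
  unfold Kb
  exact Nat.findGreatest_spec (P := fun k => nb r k ≤ m) (Nat.zero_le m)
    (show nb r 0 ≤ m by simp [nb])

private lemma lt_nb_of_gt (m j : ℕ) (hj : Kb r m < j) : m < nb r j := by
  rcases le_or_gt j m with h | h
  · by_contra hc
    exact absurd (Nat.findGreatest_is_greatest hj h) (by simpa using hc)
  · exact h.trans_le ((nb_strictMono r hr).le_apply)

private lemma Kb_mono : Monotone (Kb r) := by
  intro m m' h
  apply Nat.le_findGreatest ((Nat.findGreatest_le m).trans h)
  exact (nb_le_self r m).trans h

private lemma Kb_nb (k : ℕ) : Kb r (nb r k) = k := by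
  have h1 : k ≤ Kb r (nb r k) :=
    Nat.le_findGreatest (nb_strictMono r hr).le_apply le_rfl
  by_contra hc
  have h2 : k < Kb r (nb r k) := lt_of_le_of_ne h1 (Ne.symm hc)
  have h3 := (nb_strictMono r hr) h2
  have h4 := nb_le_self r (nb r k)
  omega

private lemma Kb_tendsto : Tendsto (Kb r) atTop atTop := by
  rw [tendsto_atTop]
  intro N
  filter_upwards [eventually_ge_atTop (nb r N)] with m hm
  calc N = Kb r (nb r N) := (Kb_nb r hr N).symm
  _ ≤ Kb r m := Kb_mono r hr hm

private lemma Kb_step (m : ℕ) :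
    Kb r (m+1) = Kb r m ∨
    (Kb r (m+1) = Kb r m + 1 ∧ m + 1 = nb r (Kb r m + 1)) := by
  have h1 : Kb r m ≤ Kb r (m+1) := Kb_mono r hr (by omega)
  have h2 : Kb r (m+1) ≤ Kb r m + 1 := by
    by_contra hc
    push_neg at hc
    have h3 : nb r (Kb r m + 1) < nb r (Kb r (m+1)) := nb_strictMono r hr (by omega)
    have h4 := nb_le_self r (m+1)
    have h5 := lt_nb_of_gt r hr m (Kb r m + 1) (by omega)
    omega
  rcases eq_or_lt_of_le h1 with h | h
  · exact Or.inl h.symm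
  · right
    have he : Kb r (m+1) = Kb r m + 1 := by omega
    refine ⟨he, ?_⟩
    have h4 := nb_le_self r (m+1)
    rw [he] at h4
    have h5 := lt_nb_of_gt r hr m (Kb r m + 1) (by omega)
    omega

private lemma db_pos (k : ℕ) : 0 < db r k :=
  div_pos (Db_pos k) (by exact_mod_cast Lb_pos r hr k)

private lemma sb_step (m : ℕ) : sb r (m+1) = sb r m + db r (Kb r m) := by
  rcases Kb_step r hr m with h | ⟨h1, h2⟩
  · unfold sb
    rw [h]
    have hle := nb_le_self r m
    have : ((m + 1 - nb r (Kb r m) : ℕ) : ℝ) = ((m - nb r (Kb r m) : ℕ) : ℝ) + 1 := by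
      push_cast [Nat.sub_add_comm hle]
      ring
    rw [this]; ring
  · unfold sb
    rw [h1, ← h2]
    simp only [Nat.sub_self, Nat.cast_zero, zero_mul, add_zero]
    have hL : nb r (Kb r m + 1) = nb r (Kb r m) + Lb r (Kb r m) := rfl
    have hLpos : 0 < Lb r (Kb r m) := Lb_pos r hr _
    have hsub : (m - nb r (Kb r m) : ℕ) = Lb r (Kb r m) - 1 := by omega
    have hcast : ((m - nb r (Kb r m) : ℕ) : ℝ) = (Lb r (Kb r m) : ℝ) - 1 := by
      rw [hsub]; push_cast [Nat.cast_sub hLpos]; ring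
    rw [hcast]
    have hdb : (Lb r (Kb r m) : ℝ) * db r (Kb r m) = Db (Kb r m) := by
      unfold db
      field_simp
    have : Real.log (xseq (Kb r m + 1)) = Real.log (xseq (Kb r m)) + Db (Kb r m) := by
      unfold Db; ring
    rw [this, ← hdb]; ring

private lemma sb_nb (k : ℕ) : sb r (nb r k) = Real.log (xseq k) := by
  unfold sb
  rw [Kb_nb r hr k]
  simp

private lemma sb_ge (m : ℕ) : Real.log (xseq (Kb r m)) ≤ sb r m := by
  unfold sb
  have := db_pos r hr (Kb r m)
  nlinarith [Nat.cast_nonneg (α := ℝ) (m - nb r (Kb r m))]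

private lemma ab_nb (k : ℕ) : ab r (nb r k) = (xseq k : ℤ) := by
  unfold ab
  rw [sb_nb r hr k]
  have hx : (0:ℝ) < xseq k := by
    have : (2:ℕ) ≤ xseq k := xseq_two_le k
    have : (2:ℝ) ≤ xseq k := by exact_mod_cast this
    linarith
  rw [Real.exp_log hx]
  have : ((xseq k : ℤ) : ℝ) = (xseq k : ℝ) := by push_cast; ring
  rw [← this, round_intCast]

private lemma db_le (k : ℕ) : db r k ≤ Real.log r := by
  have hρ : 0 < Real.log r := Real.log_pos hr
  have hD := Db_pos k
  have hL : Db k / Real.log r ≤ (Lb r k : ℝ) := Nat.le_ceil _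
  have hLpos : (0:ℝ) < Lb r k := by exact_mod_cast Lb_pos r hr k
  rw [db, div_le_iff₀ hLpos]
  calc Db k = Real.log r * (Db k / Real.log r) := by field_simp
  _ ≤ Real.log r * Lb r k := by nlinarith

private lemma db_ge (k : ℕ) :
    Real.log r - (Real.log r)^2 / (Db k + Real.log r) ≤ db r k := by
  have hρ : 0 < Real.log r := Real.log_pos hr
  have hD := Db_pos k
  have hLpos : (0:ℝ) < Lb r k := by exact_mod_cast Lb_pos r hr k
  have hL : (Lb r k : ℝ) < Db k / Real.log r + 1 :=
    Nat.ceil_lt_add_one (by positivity)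
  have h1 : Real.log r - (Real.log r)^2 / (Db k + Real.log r)
      = Real.log r * Db k / (Db k + Real.log r) := by
    field_simp; ring
  rw [h1, db, div_le_div_iff₀ (by positivity) hLpos]
  have h2 : (Lb r k : ℝ) * Real.log r < Db k + Real.log r := by
    calc (Lb r k : ℝ) * Real.log r < (Db k / Real.log r + 1) * Real.log r := by nlinarith
    _ = Db k + Real.log r := by field_simp
  nlinarith

private lemma db_tendsto : Tendsto (db r) atTop (nhds (Real.log r)) := by
  have hρ : 0 < Real.log r := Real.log_pos hr
  apply tendsto_of_tendsto_of_tendsto_of_le_of_le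
    (g := fun k => Real.log r - (Real.log r)^2 / (Db k + Real.log r))
    (h := fun _ => Real.log r)
  · have h1 : Tendsto (fun k => Db k + Real.log r) atTop atTop :=
      tendsto_atTop_add_const_right _ _ Db_tendsto
    have h2 : Tendsto (fun k => (Real.log r)^2 / (Db k + Real.log r)) atTop (nhds 0) := by
      simpa [div_eq_mul_inv] using (h1.inv_tendsto_atTop.const_mul ((Real.log r)^2))
    simpa using (tendsto_const_nhds (x := Real.log r)).sub h2
  · exact tendsto_const_nhds
  · exact db_ge r hr
  · exact db_le r hr

private lemma exp_sb_ge (m : ℕ) : (xseq (Kb r m) : ℝ) ≤ Real.exp (sb r m) := by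
  have hx : (0:ℝ) < xseq (Kb r m) := by
    have : (2:ℕ) ≤ xseq (Kb r m) := xseq_two_le _
    have : (2:ℝ) ≤ xseq (Kb r m) := by exact_mod_cast this
    linarith
  calc (xseq (Kb r m) : ℝ) = Real.exp (Real.log (xseq (Kb r m))) := (Real.exp_log hx).symm
  _ ≤ Real.exp (sb r m) := Real.exp_le_exp.mpr (sb_ge r hr m)

private lemma two_le_exp_sb (m : ℕ) : (2:ℝ) ≤ Real.exp (sb r m) := by
  refine le_trans ?_ (exp_sb_ge r hr m)
  exact_mod_cast xseq_two_le (Kb r m)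

private lemma exp_sb_tendsto : Tendsto (fun m => Real.exp (sb r m)) atTop atTop := by
  apply tendsto_atTop_mono (exp_sb_ge r hr)
  have h1 : Tendsto (fun k : ℕ => (xseq k : ℝ)) atTop atTop := by
    apply tendsto_atTop_mono (fun k => ?_) tendsto_natCast_atTop_atTop
    have : k ≤ xseq k := le_trans (Nat.lt_two_pow_self (n := k)).le
      (le_trans (Nat.pow_le_pow_right (by norm_num) (Nat.le_succ k)) (xseq_ge k))
    exact_mod_cast this
  exact h1.comp (Kb_tendsto r hr)

private lemma one_le_ab (m : ℕ) : (1:ℝ) ≤ (ab r m : ℝ) := by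
  have hE : (2:ℝ) ≤ Real.exp (sb r m) := two_le_exp_sb r hr m
  have h := abs_sub_round (Real.exp (sb r m))
  rw [abs_le] at h
  unfold ab
  linarith [h.1, h.2]

private lemma ab_div_exp_tendsto :
    Tendsto (fun m => (ab r m : ℝ) / Real.exp (sb r m)) atTop (nhds 1) := by
  have h0 : Tendsto (fun m => ((ab r m : ℝ) - Real.exp (sb r m)) / Real.exp (sb r m))
      atTop (nhds 0) := by
    apply squeeze_zero_norm (a := fun m => (1/2) * (Real.exp (sb r m))⁻¹)
    · intro m
      have hE : (0:ℝ) < Real.exp (sb r m) := Real.exp_pos _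
      have h := abs_sub_round (Real.exp (sb r m))
      rw [abs_sub_comm] at h
      have : ‖((ab r m : ℝ) - Real.exp (sb r m)) / Real.exp (sb r m)‖
          = |(ab r m : ℝ) - Real.exp (sb r m)| / Real.exp (sb r m) := by
        rw [norm_div, Real.norm_eq_abs, Real.norm_eq_abs, abs_of_pos hE]
      rw [this, div_eq_mul_inv, mul_comm]
      have hinv : (0:ℝ) ≤ (Real.exp (sb r m))⁻¹ := by positivity
      calc (Real.exp (sb r m))⁻¹ * |(ab r m : ℝ) - Real.exp (sb r m)|
          ≤ (Real.exp (sb r m))⁻¹ * (1/2) := by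
            apply mul_le_mul_of_nonneg_left _ hinv
            exact h
      _ = 1/2 * (Real.exp (sb r m))⁻¹ := by ring
    · simpa using ((exp_sb_tendsto r hr).inv_tendsto_atTop.const_mul ((1:ℝ)/2))
  have h1 := h0.add (tendsto_const_nhds (x := (1:ℝ)))
  rw [zero_add] at h1
  apply h1.congr
  intro m
  have hE : Real.exp (sb r m) ≠ 0 := (Real.exp_pos _).ne'
  field_simp
  ring

private lemma ratio_tendsto :
    Tendsto (fun m => (ab r (m+1) : ℝ) / (ab r m)) atTop (nhds r) := by
  have hrpos : (0:ℝ) < r := lt_trans one_pos hr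
  have f1 : Tendsto (fun m => (ab r (m+1) : ℝ) / Real.exp (sb r (m+1))) atTop (nhds 1) :=
    (ab_div_exp_tendsto r hr).comp (tendsto_add_atTop_nat 1)
  have f2 : Tendsto (fun m => Real.exp (sb r (m+1)) / Real.exp (sb r m)) atTop (nhds r) := by
    have heq : ∀ m, Real.exp (sb r (m+1)) / Real.exp (sb r m) = Real.exp (db r (Kb r m)) := by
      intro m
      rw [sb_step r hr m, Real.exp_add]
      rw [mul_comm, mul_div_assoc, div_self (Real.exp_pos _).ne', mul_one]
    have h2 : Tendsto (fun m => Real.exp (db r (Kb r m))) atTop (nhds (Real.exp (Real.log r))) :=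
      (Real.continuous_exp.continuousAt.tendsto).comp
        ((db_tendsto r hr).comp (Kb_tendsto r hr))
    rw [Real.exp_log hrpos] at h2
    exact h2.congr (fun m => (heq m).symm)
  have f3 : Tendsto (fun m => Real.exp (sb r m) / (ab r m : ℝ)) atTop (nhds 1) := by
    have := (ab_div_exp_tendsto r hr).inv₀ one_ne_zero
    simpa [inv_div] using this
  have key : ∀ m, (ab r (m+1) : ℝ) / (ab r m)
      = ((ab r (m+1) : ℝ) / Real.exp (sb r (m+1))) * (Real.exp (sb r (m+1)) / Real.exp (sb r m))
        * (Real.exp (sb r m) / (ab r m : ℝ)) := by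
    intro m
    have e1 : Real.exp (sb r (m+1)) ≠ 0 := (Real.exp_pos _).ne'
    have e2 : Real.exp (sb r m) ≠ 0 := (Real.exp_pos _).ne'
    field_simp
  have := (f1.mul f2).mul f3
  rw [one_mul, mul_one] at this
  exact this.congr (fun m => (key m).symm)

end

private lemma ring_aux {R : Type*} [CommRing R] [TopologicalSpace R] [IsTopologicalRing R]
    [T2Space R] (u v : ℕ → R) (h : ∀ k, u k = v k * v k + 1)
    (hu : Tendsto u atTop (nhds 0)) (hv : Tendsto v atTop (nhds 0)) : (1:R) = 0 := by
  have h2 : Tendsto (fun k => u k - v k * v k) atTop (nhds 0) := by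
    simpa using hu.sub (hv.mul hv)
  have h3 : Tendsto (fun _ : ℕ => (1:R)) atTop (nhds 0) := by
    apply h2.congr
    intro k
    rw [h k]; ring
  exact tendsto_nhds_unique tendsto_const_nhds h3

theorem stmt8 (r : ℝ) (hr : 1 < r) :
    ∃ a : ℕ → ℤ,
      Tendsto (fun n => (a (n + 1) : ℝ) / a n) atTop (nhds r) ∧
      ∀ (τ : TopologicalSpace ℤ), @IsTopologicalRing ℤ τ _ → @T2Space ℤ τ →
        τ ≠ ⊥ → ¬ Tendsto a atTop (@nhds ℤ τ 0) := by
  refine ⟨ab r, ratio_tendsto r hr, ?_⟩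
  intro τ hring ht2 _ hconv
  have hnt : Tendsto (nb r) atTop atTop := (nb_strictMono r hr).tendsto_atTop
  have hu : Tendsto (fun k => ab r (nb r (k+1))) atTop (@nhds ℤ τ 0) :=
    hconv.comp (hnt.comp (tendsto_add_atTop_nat 1))
  have hv : Tendsto (fun k => ab r (nb r k)) atTop (@nhds ℤ τ 0) :=
    hconv.comp hnt
  have hrel : ∀ k, ab r (nb r (k+1)) = (ab r (nb r k)) * (ab r (nb r k)) + 1 := by
    intro k
    rw [ab_nb r hr, ab_nb r hr]
    have : xseq (k+1) = xseq k * xseq k + 1 := by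
      show (xseq k)^2 + 1 = _; ring
    rw [this]; push_cast; ring
  exact one_ne_zero (@ring_aux ℤ _ τ hring ht2 _ _ hrel hu hv)
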